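/- Let (gₖ) be a sequence of polynomials over ℂ of degree at most n whose coefficients converge coefficientwise to those of a polynomial f of degree exactly n. Then for each k with gₖ of degree n, every root of gₖ, and the sequence of roots sₖ chosen arbitrarily, (sₖ) is bounded and every limit point of (sₖ) is a root of f. -/

import Mathlib

open Polynomial Filter NNReal

theorem roots_bounded_and_cluster_points_are_roots
    (n : ℕ) (f : Polynomial ℂ) (hf : f.natDegree = n) (hfn : f.coeff n ≠ 0)
    (g : ℕ → Polynomial ℂ) (hg : ∀ k, (g k).natDegree = n)
    (hcoeff : ∀ i ≤ n, Tendsto (fun k => (g k).coeff i) atTop (nhds (f.coeff i)))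
    (s : ℕ → ℂ) (hroot : ∀ k, (g k).eval (s k) = 0) :
    (∃ C : ℝ, ∀ k, ‖s k‖ ≤ C) ∧
      ∀ l : ℂ, MapClusterPt l atTop s → f.eval l = 0 := by
  -- the case n = 0 is contradictory
  rcases Nat.eq_zero_or_pos n with hn | hn
  · exfalso
    subst hn
    have h0 : ∀ k, (g k).coeff 0 = 0 := by
      intro k
      have hC := Polynomial.eq_C_of_natDegree_eq_zero (hg k)
      have hr := hroot k
      rw [hC] at hr ⊢
      simpa using hr
    have h := hcoeff 0 le_rfl
    simp only [h0] at h
    exact hfn (tendsto_nhds_unique h tendsto_const_nhds)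
  -- n ≥ 1 : each g k is nonzero with leading coefficient (g k).coeff n ≠ 0
  have hgne : ∀ k, g k ≠ 0 := by
    intro k h
    have := hg k
    rw [h, Polynomial.natDegree_zero] at this
    omega
  have hlc : ∀ k, (g k).coeff n ≠ 0 := by
    intro k
    rw [← hg k]
    exact fun h => hgne k (Polynomial.leadingCoeff_eq_zero.mp h)
  -- lower bound on the leading coefficients
  obtain ⟨N, hN⟩ : ∃ N, ∀ k ≥ N, ‖f.coeff n‖ / 2 ≤ ‖(g k).coeff n‖ := by
    have htn : Tendsto (fun k => ‖(g k).coeff n‖) atTop (nhds ‖f.coeff n‖) :=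
      (hcoeff n le_rfl).norm
    have : ‖f.coeff n‖ / 2 < ‖f.coeff n‖ := by
      have : 0 < ‖f.coeff n‖ := norm_pos_iff.mpr hfn
      linarith
    exact (htn.eventually (eventually_ge_nhds this)).exists_forall_of_atTop
  obtain ⟨ε, hε0, hε⟩ : ∃ ε : ℝ≥0, 0 < ε ∧ ∀ k, ε ≤ ‖(g k).coeff n‖₊ := by
    set S : Finset ℝ≥0 :=
      insert (‖f.coeff n‖₊ / 2) ((Finset.range N).image fun k => ‖(g k).coeff n‖₊) with hS
    have hSne : S.Nonempty := ⟨_, Finset.mem_insert_self _ _⟩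
    refine ⟨S.min' hSne, ?_, ?_⟩
    · rcases Finset.mem_insert.mp (S.min'_mem hSne) with h | h
      · rw [h]
        have h2 : (0:ℝ≥0) < ‖f.coeff n‖₊ := by simpa using hfn
        exact div_pos h2 two_pos
      · obtain ⟨k, -, hk⟩ := Finset.mem_image.mp h
        rw [← hk]
        simpa using hlc k
    · intro k
      rcases lt_or_ge k N with hk | hk
      · exact S.min'_le _ (Finset.mem_insert_of_mem (Finset.mem_image.mpr ⟨k, Finset.mem_range.mpr hk, rfl⟩))
      · refine le_trans (S.min'_le _ (Finset.mem_insert_self _ _)) ?_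
        have := hN k hk
        rw [← Real.toNNReal_coe (r := ‖(g k).coeff n‖₊), coe_nnnorm]
        rw [show (‖f.coeff n‖₊ / 2 : ℝ≥0) = (‖f.coeff n‖ / 2).toNNReal by
          rw [Real.toNNReal_div (by positivity), Real.toNNReal_ofNat, norm_toNNReal]]
        exact Real.toNNReal_mono this
  -- upper bounds on the coefficients
  have hB : ∀ i ≤ n, ∃ B : ℝ≥0, ∀ k, ‖(g k).coeff i‖₊ ≤ B := by
    intro i hi
    obtain ⟨B, hBmem⟩ := ((hcoeff i hi).norm).bddAbove_range
    refine ⟨B.toNNReal, fun k => ?_⟩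
    rw [← norm_toNNReal]
    exact Real.toNNReal_mono (hBmem (Set.mem_range_self k))
  choose B hBle using hB
  set Bm : ℝ≥0 := (Finset.range n).sup (fun i => if h : i ≤ n then B i h else 0) with hBm
  have hcb : ∀ k, cauchyBound (g k) ≤ Bm / ε + 1 := by
    intro k
    unfold Polynomial.cauchyBound
    gcongr
    · rw [hBm, hg k]
      apply Finset.sup_mono_fun
      intro i hi
      have hi' : i ≤ n := le_of_lt (Finset.mem_range.mp hi) |>.trans le_rfl
      rw [dif_pos hi']
      exact hBle i hi' k
    · rw [Polynomial.leadingCoeff, hg k]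
      exact hε k
  constructor
  · refine ⟨(Bm / ε + 1 : ℝ≥0), fun k => ?_⟩
    have h1 : ‖s k‖₊ < cauchyBound (g k) :=
      Polynomial.IsRoot.norm_lt_cauchyBound (hgne k) (hroot k)
    have h2 : ‖s k‖₊ ≤ Bm / ε + 1 := le_of_lt (lt_of_lt_of_le h1 (hcb k))
    calc ‖s k‖ = ‖s k‖ := rfl
      _ ≤ ((Bm / ε + 1 : ℝ≥0) : ℝ) := by exact_mod_cast h2
  · intro l hl
    obtain ⟨ψ, hψ, hts⟩ := TopologicalSpace.FirstCountableTopology.tendsto_subseq hl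
    have hev : ∀ k, (g k).eval (s k) = ∑ i ∈ Finset.range (n + 1), (g k).coeff i * (s k) ^ i := by
      intro k
      exact Polynomial.eval_eq_sum_range' (by rw [hg k]; omega) _
    have hevf : f.eval l = ∑ i ∈ Finset.range (n + 1), f.coeff i * l ^ i :=
      Polynomial.eval_eq_sum_range' (by rw [hf]; omega) _
    have key : Tendsto (fun j => ∑ i ∈ Finset.range (n + 1), (g (ψ j)).coeff i * (s (ψ j)) ^ i)
        atTop (nhds (∑ i ∈ Finset.range (n + 1), f.coeff i * l ^ i)) := by
      apply tendsto_finset_sum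
      intro i hi
      have hi' : i ≤ n := Nat.lt_succ_iff.mp (Finset.mem_range.mp hi)
      exact ((hcoeff i hi').comp hψ.tendsto_atTop).mul (hts.pow i)
    have hzero : Tendsto (fun j => (g (ψ j)).eval (s (ψ j))) atTop (nhds (f.eval l)) := by
      rw [hevf]
      simpa only [← hev] using key
    have : Tendsto (fun _ : ℕ => (0 : ℂ)) atTop (nhds (f.eval l)) := by
      simpa only [hroot] using hzero
    exact (tendsto_nhds_unique tendsto_const_nhds this).symm
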